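/- Let m be a positive integer and F a finite set of faces (unordered triples of distinct indices in Fin m). For an admissible metric u : Fin m → ℝ (u_e > 0 everywhere and, for each face {i,j,k} ∈ F, the lengths d_i = √(2u_i), d_j = √(2u_j), d_k = √(2u_k) satisfy the strict triangle inequalities), define the cotangent edge weight w_e(u) = (1/2) Σ over faces of F containing e of cot θ_e, where θ_e is the angle opposite edge e in that face, given by cos θ_i = (d_j² + d_k² − d_i²)/(2 d_j d_k). Then there exists a differentiable function E on the open set of admissible metrics with ∂E/∂u_e (u) = 2 w_e(u) for every admissible u and every edge e. -/

import Mathlib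

/-- `u` is an admissible metric: `u_e > 0` for every edge, and on each face the
lengths `d_e = √(2 u_e)` satisfy the strict triangle inequalities. -/
def AdmissibleMetric (m : ℕ) (F : Finset (Finset (Fin m))) (u : Fin m → ℝ) : Prop :=
  (∀ e, 0 < u e) ∧
  ∀ f ∈ F, ∀ i ∈ f, ∀ j ∈ f, ∀ k ∈ f, i ≠ j → i ≠ k → j ≠ k →
    Real.sqrt (2 * u i) < Real.sqrt (2 * u j) + Real.sqrt (2 * u k)

/-- The angle opposite edge `e` in face `f`, determined by the law of cosines:
`cos θ_i = (d_j² + d_k² − d_i²)/(2 d_j d_k)` where `{j,k} = f \ {e}` and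
`d_a = √(2 u_a)` (so `d_a² = 2 u_a`). -/
noncomputable def faceAngle (m : ℕ) (u : Fin m → ℝ) (f : Finset (Fin m)) (e : Fin m) : ℝ :=
  Real.arccos ((∑ a ∈ f.erase e, 2 * u a - 2 * u e) /
    (2 * ∏ a ∈ f.erase e, Real.sqrt (2 * u a)))

/-- The cotangent edge weight
`w_e(u) = (1/2) Σ_{f ∈ F, e ∈ f} cot θ_e^f`. -/
noncomputable def cotWeight (m : ℕ) (F : Finset (Finset (Fin m)))
    (u : Fin m → ℝ) (e : Fin m) : ℝ :=
  (1 / 2) * ∑ f ∈ F.filter (fun f => e ∈ f), Real.cot (faceAngle m u f e)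

/- ### Auxiliary material for the proof -/

lemma quad_pos {a b c : ℝ} (ha : 0 < a) (hb : 0 < b) (hc : 0 < c)
    (h1 : Real.sqrt (2*a) < Real.sqrt (2*b) + Real.sqrt (2*c))
    (h2 : Real.sqrt (2*b) < Real.sqrt (2*a) + Real.sqrt (2*c))
    (h3 : Real.sqrt (2*c) < Real.sqrt (2*a) + Real.sqrt (2*b)) :
    0 < (a+b+c)*(a+b+c) - 2*(a*a + b*b + c*c) := by
  have ea : Real.sqrt (2*a) = Real.sqrt 2 * Real.sqrt a := Real.sqrt_mul (by norm_num) a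
  have eb : Real.sqrt (2*b) = Real.sqrt 2 * Real.sqrt b := Real.sqrt_mul (by norm_num) b
  have ec : Real.sqrt (2*c) = Real.sqrt 2 * Real.sqrt c := Real.sqrt_mul (by norm_num) c
  have s2 : (0:ℝ) < Real.sqrt 2 := by positivity
  set x := Real.sqrt a
  set y := Real.sqrt b
  set z := Real.sqrt c
  have hx : x^2 = a := Real.sq_sqrt ha.le
  have hy : y^2 = b := Real.sq_sqrt hb.le
  have hz : z^2 = c := Real.sq_sqrt hc.le
  have hx0 : 0 < x := Real.sqrt_pos.2 ha
  have hy0 : 0 < y := Real.sqrt_pos.2 hb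
  have hz0 : 0 < z := Real.sqrt_pos.2 hc
  rw [ea, eb, ec] at h1 h2 h3
  have p1 : 0 < y + z - x := by nlinarith
  have p2 : 0 < x + z - y := by nlinarith
  have p3 : 0 < x + y - z := by nlinarith
  have ps : 0 < x + y + z := by positivity
  nlinarith [mul_pos (mul_pos p1 p2) (mul_pos p3 ps)]

lemma cot_formula {a b c : ℝ} (ha : 0 < a) (hb : 0 < b) (hc : 0 < c)
    (h1 : Real.sqrt (2*a) < Real.sqrt (2*b) + Real.sqrt (2*c))
    (h2 : Real.sqrt (2*b) < Real.sqrt (2*a) + Real.sqrt (2*c))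
    (h3 : Real.sqrt (2*c) < Real.sqrt (2*a) + Real.sqrt (2*b)) :
    Real.cot (Real.arccos ((2*b + 2*c - 2*a) / (2 * (Real.sqrt (2*b) * Real.sqrt (2*c))))) =
      (b + c - a) / Real.sqrt ((a+b+c)*(a+b+c) - 2*(a*a + b*b + c*c)) := by
  have hQ : 0 < (a+b+c)*(a+b+c) - 2*(a*a + b*b + c*c) := quad_pos ha hb hc h1 h2 h3
  set Q := (a+b+c)*(a+b+c) - 2*(a*a + b*b + c*c) with hQdef
  have hbc : Real.sqrt (2*b) * Real.sqrt (2*c) = 2 * Real.sqrt (b*c) := by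
    rw [← Real.sqrt_mul (by positivity), show (2*b)*(2*c) = 4*(b*c) by ring,
      Real.sqrt_mul (by norm_num), show Real.sqrt 4 = 2 by
        rw [show (4:ℝ) = 2^2 by norm_num, Real.sqrt_sq (by norm_num)]]
  have hbc0 : 0 < Real.sqrt (b*c) := Real.sqrt_pos.2 (by positivity)
  have ht : (2*b + 2*c - 2*a) / (2 * (Real.sqrt (2*b) * Real.sqrt (2*c)))
      = (b + c - a) / (2 * Real.sqrt (b*c)) := by
    rw [hbc]; field_simp
  set t := (b + c - a) / (2 * Real.sqrt (b*c)) with htdef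
  have hsq : (Real.sqrt (b*c))^2 = b*c := Real.sq_sqrt (by positivity)
  have hsq2 : (Real.sqrt b * Real.sqrt c)^2 = b*c := by
    rw [← Real.sqrt_mul hb.le]; exact Real.sq_sqrt (by positivity)
  have h1t : 1 - t^2 = Q / (4*(b*c)) := by
    rw [htdef]
    field_simp
    nlinarith [hsq, hsq2]
  have h1tpos : 0 < 1 - t^2 := by rw [h1t]; positivity
  have habs : -1 ≤ t ∧ t ≤ 1 := by constructor <;> nlinarith
  rw [ht, Real.cot_eq_cos_div_sin, Real.cos_arccos habs.1 habs.2, Real.sin_arccos]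
  have hsin : Real.sqrt (1 - t^2) = Real.sqrt Q / (2 * Real.sqrt (b*c)) := by
    rw [h1t, Real.sqrt_div hQ.le, Real.sqrt_mul (by norm_num : (0:ℝ) ≤ 4),
      show Real.sqrt 4 = 2 by
        rw [show (4:ℝ) = 2^2 by norm_num, Real.sqrt_sq (by norm_num)]]
  rw [hsin, htdef]
  have hQ0 : Real.sqrt Q ≠ 0 := (Real.sqrt_pos.2 hQ).ne'
  field_simp

/-- The quadratic form `Q_f(u) = (Σ_{a∈f} u_a)² − 2 Σ_{a∈f} u_a²`
(four times the squared area of face `f`). -/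
noncomputable def Qface {m : ℕ} (f : Finset (Fin m)) (u : Fin m → ℝ) : ℝ :=
  (∑ a ∈ f, u a) * (∑ a ∈ f, u a) - 2 * ∑ a ∈ f, u a * u a

/-- The derivative of `Qface f` at `u`. -/
noncomputable def Lface {m : ℕ} (f : Finset (Fin m)) (u : Fin m → ℝ) :
    (Fin m → ℝ) →L[ℝ] ℝ :=
  ∑ a ∈ f, (2 * (∑ b ∈ f, u b) - 4 * u a) • ContinuousLinearMap.proj a

lemma hasFDerivAt_Qface {m : ℕ} (f : Finset (Fin m)) (u : Fin m → ℝ) :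
    HasFDerivAt (Qface f) (Lface f u) u := by
  have hS : HasFDerivAt (fun v : Fin m → ℝ => ∑ a ∈ f, v a)
      (∑ a ∈ f, (ContinuousLinearMap.proj a : (Fin m → ℝ) →L[ℝ] ℝ)) u :=
    HasFDerivAt.fun_sum fun a _ => hasFDerivAt_apply (𝕜 := ℝ) a u
  have hT : HasFDerivAt (fun v : Fin m → ℝ => ∑ a ∈ f, v a * v a)
      (∑ a ∈ f, (u a • (ContinuousLinearMap.proj a : (Fin m → ℝ) →L[ℝ] ℝ) +
        u a • (ContinuousLinearMap.proj a : (Fin m → ℝ) →L[ℝ] ℝ))) u :=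
    HasFDerivAt.fun_sum fun a _ =>
      (hasFDerivAt_apply (𝕜 := ℝ) a u).mul (hasFDerivAt_apply (𝕜 := ℝ) a u)
  have h := (hS.mul hS).sub (hT.const_mul 2)
  convert h using 1
  iterate 6 rfl
  ext v
  simp only [Lface, ContinuousLinearMap.coe_sum', Finset.sum_apply,
    ContinuousLinearMap.smul_apply, ContinuousLinearMap.proj_apply, smul_eq_mul,
    ContinuousLinearMap.coe_sub', Pi.sub_apply, ContinuousLinearMap.add_apply,
    ContinuousLinearMap.coe_smul', Pi.smul_apply]
  rw [Finset.mul_sum, Finset.mul_sum, Finset.mul_sum, ← Finset.sum_add_distrib,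
    ← Finset.sum_sub_distrib]
  exact Finset.sum_congr rfl fun a _ => by
    rw [show (∑ x ∈ f, 2 * u x) = 2 * ∑ x ∈ f, u x from (Finset.mul_sum _ _ _).symm]; ring

/-- There is a differentiable energy `E` on the open set of
admissible metrics whose partial derivatives are twice the cotangent edge
weights: `∂E/∂u_e = 2 w_e(u)`. -/
theorem exists_energy_with_gradient_cotWeight (m : ℕ) (hm : 0 < m)
    (F : Finset (Finset (Fin m))) (hF : ∀ f ∈ F, f.card = 3) :
    ∃ E : (Fin m → ℝ) → ℝ, ∀ u : Fin m → ℝ, AdmissibleMetric m F u →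
      DifferentiableAt ℝ E u ∧
      ∀ e : Fin m, fderiv ℝ E u (Pi.single e 1) = 2 * cotWeight m F u e := by
  refine ⟨fun u => ∑ f ∈ F, Real.sqrt (Qface f u), ?_⟩
  intro u hu
  obtain ⟨hu0, hTri⟩ := hu
  -- positivity of Qface on each face
  have hQpos : ∀ f ∈ F, 0 < Qface f u := by
    intro f hf
    obtain ⟨i, j, k, hij, hik, hjk, rfl⟩ := Finset.card_eq_three.mp (hF f hf)
    have hi : i ∈ ({i, j, k} : Finset (Fin m)) := by simp
    have hj : j ∈ ({i, j, k} : Finset (Fin m)) := by simp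
    have hk : k ∈ ({i, j, k} : Finset (Fin m)) := by simp
    have hsum : ∀ g : Fin m → ℝ, ∑ a ∈ ({i, j, k} : Finset (Fin m)), g a = g i + g j + g k := by
      intro g
      rw [Finset.sum_insert (by simp [hij, hik]), Finset.sum_pair hjk]
      ring
    have := quad_pos (hu0 i) (hu0 j) (hu0 k)
      (hTri _ hf i hi j hj k hk hij hik hjk)
      (hTri _ hf j hj i hi k hk hij.symm hjk hik)
      (hTri _ hf k hk i hi j hj hik.symm hjk.symm hij)
    unfold Qface
    rw [hsum (fun a => u a), hsum (fun a => u a * u a)]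
    convert this using 2 <;> ring
  -- the derivative of the energy
  have hE : HasFDerivAt (fun u => ∑ f ∈ F, Real.sqrt (Qface f u))
      (∑ f ∈ F, (1 / (2 * Real.sqrt (Qface f u))) • Lface f u) u := by
    refine HasFDerivAt.fun_sum fun f hf => ?_
    exact (Real.hasDerivAt_sqrt (hQpos f hf).ne').comp_hasFDerivAt u (hasFDerivAt_Qface f u)
  refine ⟨hE.differentiableAt, fun e => ?_⟩
  rw [hE.fderiv]
  -- evaluate the derivative at `Pi.single e 1`
  have hLval : ∀ f : Finset (Fin m), Lface f u (Pi.single e 1)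
      = if e ∈ f then 2 * (∑ b ∈ f, u b) - 4 * u e else 0 := by
    intro f
    simp only [Lface, ContinuousLinearMap.coe_sum', Finset.sum_apply,
      ContinuousLinearMap.smul_apply, ContinuousLinearMap.proj_apply, smul_eq_mul]
    have step : ∀ a ∈ f, (2 * (∑ b ∈ f, u b) - 4 * u a) * (Pi.single e (1:ℝ) : Fin m → ℝ) a
        = if a = e then 2 * (∑ b ∈ f, u b) - 4 * u a else 0 := by
      intro a _
      rw [Pi.single_apply]
      split <;> simp
    rw [Finset.sum_congr rfl step,
      Finset.sum_ite_eq' f e (fun a => 2 * (∑ b ∈ f, u b) - 4 * u a)]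
  simp only [ContinuousLinearMap.coe_sum', Finset.sum_apply,
    ContinuousLinearMap.smul_apply, smul_eq_mul, hLval]
  rw [show (∑ f ∈ F, (1 / (2 * Real.sqrt (Qface f u))) *
        (if e ∈ f then 2 * (∑ b ∈ f, u b) - 4 * u e else 0))
      = ∑ f ∈ F, (if e ∈ f then
          (1 / (2 * Real.sqrt (Qface f u))) * (2 * (∑ b ∈ f, u b) - 4 * u e) else 0) from
    Finset.sum_congr rfl fun f _ => by split <;> simp]
  rw [← Finset.sum_filter]
  rw [cotWeight, ← mul_assoc]
  norm_num
  refine Finset.sum_congr rfl fun f hf => ?_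
  rw [Finset.mem_filter] at hf
  obtain ⟨hfF, hef⟩ := hf
  -- identify the two other edges of the face
  have hcard2 : (f.erase e).card = 2 := by
    rw [Finset.card_erase_of_mem hef, hF f hfF]
  obtain ⟨j, k, hjk, herase⟩ := Finset.card_eq_two.mp hcard2
  have hj : j ∈ f := Finset.mem_of_mem_erase (herase ▸ (by simp : j ∈ ({j, k} : Finset (Fin m))))
  have hk : k ∈ f := Finset.mem_of_mem_erase (herase ▸ (by simp : k ∈ ({j, k} : Finset (Fin m))))
  have hej : e ≠ j :=
    (Finset.ne_of_mem_erase (herase ▸ (by simp : j ∈ ({j, k} : Finset (Fin m))))).symm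
  have hek : e ≠ k :=
    (Finset.ne_of_mem_erase (herase ▸ (by simp : k ∈ ({j, k} : Finset (Fin m))))).symm
  have hfeq : f = insert e {j, k} := by
    rw [← herase, Finset.insert_erase hef]
  have hsum : ∀ g : Fin m → ℝ, ∑ a ∈ f, g a = g e + g j + g k := by
    intro g
    rw [hfeq, Finset.sum_insert (by simp [hej, hek]), Finset.sum_pair hjk]
    ring
  -- rewrite faceAngle
  have hangle : faceAngle m u f e =
      Real.arccos ((2 * u j + 2 * u k - 2 * u e) /
        (2 * (Real.sqrt (2 * u j) * Real.sqrt (2 * u k)))) := by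
    rw [faceAngle, herase, Finset.sum_pair hjk, Finset.prod_pair hjk]
  have htri1 := hTri f hfF e hef j hj k hk hej hek hjk
  have htri2 := hTri f hfF j hj e hef k hk hej.symm hjk hek
  have htri3 := hTri f hfF k hk e hef j hj hek.symm hjk.symm hej
  have hcot := cot_formula (hu0 e) (hu0 j) (hu0 k) htri1 htri2 htri3
  rw [hangle, hcot]
  have hQf : Qface f u = (u e + u j + u k) * (u e + u j + u k)
      - 2 * (u e * u e + u j * u j + u k * u k) := by
    rw [Qface, hsum (fun a => u a), hsum (fun a => u a * u a)]
  have hQpos' : (0:ℝ) < (u e + u j + u k) * (u e + u j + u k)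
      - 2 * (u e * u e + u j * u j + u k * u k) :=
    quad_pos (hu0 e) (hu0 j) (hu0 k) htri1 htri2 htri3
  rw [hQf, hsum (fun a => u a)]
  have hs0 : Real.sqrt ((u e + u j + u k) * (u e + u j + u k)
      - 2 * (u e * u e + u j * u j + u k * u k)) ≠ 0 := (Real.sqrt_pos.2 hQpos').ne'
  field_simp
  ring
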